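/- Let F be a field, H1 and H2 groups, W1 a finite-dimensional simple module over the group algebra F[H1], and W2 a finite-dimensional absolutely simple module over the group algebra F[H2]. Let D = End_{F[H1]}(W1) be the endomorphism ring of the F[H1]-module W1, acting on W1 ⊗_F W2 through the first tensor factor. Then the image of the natural F-algebra homomorphism F[H1 × H2] = F[H1] ⊗_F F[H2] → End_F(W1 ⊗_F W2) coincides with End_D(W1 ⊗_F W2), the ring of D-linear endomorphisms of W1 ⊗_F W2. -/

import Mathlib

open Function Module
open scoped TensorProduct

universe u v w x y

/-- `W` is a *simple* module over the group algebra `F[H]` (for the action given by the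
representation `τ`): `W ≠ 0` and the only `H`-invariant `F`-subspaces of `W` are `0`, `W`. -/
def RepIsIrreducible {F : Type u} [Field F] {H : Type v} [Group H]
    {W : Type w} [AddCommGroup W] [Module F W] (τ : Representation F H W) : Prop :=
  Nontrivial W ∧
    ∀ p : Submodule F W, (∀ h : H, ∀ w ∈ p, τ h w ∈ p) → p = ⊥ ∨ p = ⊤

/-- `W` is an *absolutely simple* module over `F[H]`: it remains simple after extension of
scalars to every field extension `E` of `F`. -/
def RepIsAbsolutelyIrreducible {F : Type u} [Field F] {H : Type v} [Group H]
    {W : Type w} [AddCommGroup W] [Module F W] (τ : Representation F H W) : Prop :=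
  ∀ (E : Type u) [Field E] [Algebra F E],
    Nontrivial (E ⊗[F] W) ∧
      ∀ p : Submodule E (E ⊗[F] W),
        (∀ h : H, ∀ x ∈ p, LinearMap.baseChange E (τ h) x ∈ p) → p = ⊥ ∨ p = ⊤

/-- Double centralizer / Jacobson density for a finite-dimensional irreducible rep. -/
theorem aux_dc {K : Type*} [Field K] {H : Type*} [Group H]
    {W : Type*} [AddCommGroup W] [Module K W] [FiniteDimensional K W]
    (σ : Representation K H W) (hσ : RepIsIrreducible σ) (g : W →ₗ[K] W)
    (hg : ∀ d : W →ₗ[K] W, (∀ h : H, d ∘ₗ σ h = σ h ∘ₗ d) → g ∘ₗ d = d ∘ₗ g) :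
    g ∈ Submodule.span K {f : W →ₗ[K] W | ∃ h : H, f = σ h} := by
  classical
  letI : Module (MonoidAlgebra K H) W := Module.compHom W σ.asAlgebraHom.toRingHom
  have rsmul : ∀ (r : MonoidAlgebra K H) (w : W), r • w = σ.asAlgebraHom r w := fun _ _ => rfl
  haveI : IsScalarTower K (MonoidAlgebra K H) W := ⟨fun c r w => by
    rw [rsmul, rsmul, map_smul, LinearMap.smul_apply]⟩
  haveI : Nontrivial W := hσ.1
  haveI hsimple : IsSimpleModule (MonoidAlgebra K H) W := by
    refine IsSimpleModule.mk (toIsSimpleOrder := ⟨fun p => ?_⟩)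
    have hinv : ∀ h : H, ∀ w ∈ p.restrictScalars K, σ h w ∈ p.restrictScalars K := by
      intro h w hw
      have h1 : (MonoidAlgebra.single h (1:K)) • w = σ h w := by
        rw [rsmul, σ.asAlgebraHom_single_one]
      rw [Submodule.restrictScalars_mem] at hw ⊢
      rw [← h1]
      exact p.smul_mem _ hw
    rcases hσ.2 _ hinv with h | h
    · left; rwa [Submodule.restrictScalars_eq_bot_iff] at h
    · right; rwa [Submodule.restrictScalars_eq_top_iff] at h
  haveI : IsSemisimpleModule (MonoidAlgebra K H) W :=
    IsSemisimpleModule.of_sSup_simples_eq_top (eq_top_iff.mpr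
      (le_sSup (show IsSimpleModule (MonoidAlgebra K H) (⊤ : Submodule (MonoidAlgebra K H) W) from
        IsSimpleModule.congr Submodule.topEquiv)))
  set n := Module.finrank K W with hn
  set b := Module.finBasis K W with hb
  haveI : IsSemisimpleModule (MonoidAlgebra K H) (Fin n → W) := by
    refine isSemisimpleModule_of_isSemisimpleModule_submodule'
      (p := fun i : Fin n =>
        LinearMap.range (LinearMap.single (MonoidAlgebra K H) (fun _ : Fin n => W) i))
      (fun i => ?_) ?_
    · exact IsSemisimpleModule.congr
        (LinearEquiv.ofInjective _ (by intro a b h; exact Pi.single_injective i h)).symm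
    · simp_rw [LinearMap.range_eq_map, Submodule.iSup_map_single, Submodule.pi_top]
  set wv : Fin n → W := fun i => b i with hwv
  obtain ⟨q, hq⟩ := exists_isCompl (Submodule.span (MonoidAlgebra K H) {wv})
  set π : (Fin n → W) →ₗ[MonoidAlgebra K H] (Fin n → W) :=
    (Submodule.span (MonoidAlgebra K H) {wv}).subtype ∘ₗ
      ((Submodule.span (MonoidAlgebra K H) {wv}).projectionOnto q hq) with hπ
  have hπmem : ∀ x : Fin n → W, π x ∈ Submodule.span (MonoidAlgebra K H) {wv} := fun x =>
    (((Submodule.span (MonoidAlgebra K H) {wv}).projectionOnto q hq) x).2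
  have hπw : π wv = wv := by
    have := Submodule.projectionOnto_apply_left hq
      ⟨wv, Submodule.mem_span_singleton_self wv⟩
    simp only [hπ, LinearMap.comp_apply, this, Submodule.subtype_apply]
  have key : ∀ (φ : (Fin n → W) →ₗ[MonoidAlgebra K H] (Fin n → W)) (x : Fin n → W) (i : Fin n),
      g ((φ x) i) = (φ (fun j => g (x j))) i := by
    intro φ x i
    have single_case : ∀ (j : Fin n) (v : W),
        g ((φ (Pi.single j v)) i) = (φ (Pi.single j (g v))) i := by
      intro j v
      set d : W →ₗ[K] W := (LinearMap.proj i) ∘ₗ (φ.restrictScalars K) ∘ₗ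
        (LinearMap.single K (fun _ : Fin n => W) j) with hd
      have hdv : ∀ v : W, d v = (φ (Pi.single j v)) i := fun v => rfl
      have hsingle : ∀ (f : W →ₗ[K] W) (v : W),
          (Pi.single j (f v) : Fin n → W) = fun k => f ((Pi.single j v : Fin n → W) k) := by
        intro f v; funext k
        by_cases hk : k = j
        · subst hk; simp
        · simp [Pi.single_eq_of_ne hk]
      have hdcomm : ∀ h : H, d ∘ₗ σ h = σ h ∘ₗ d := by
        intro h; ext v'
        show (φ (Pi.single j (σ h v'))) i = σ h ((φ (Pi.single j v')) i)
        have h1 : (Pi.single j (σ h v') : Fin n → W)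
            = (MonoidAlgebra.single h (1:K)) • (Pi.single j v' : Fin n → W) := by
          rw [hsingle (σ h) v']
          funext k
          show σ h _ = (MonoidAlgebra.single h (1:K)) • ((Pi.single j v' : Fin n → W) k)
          rw [rsmul, σ.asAlgebraHom_single_one]
        rw [h1, map_smul]
        show ((MonoidAlgebra.single h (1:K)) • (φ (Pi.single j v'))) i = _
        rw [Pi.smul_apply, rsmul, σ.asAlgebraHom_single_one]
      have hcomm := hg d hdcomm
      calc g ((φ (Pi.single j v)) i) = g (d v) := by rw [hdv]
        _ = d (g v) := by
            rw [← LinearMap.comp_apply, hcomm, LinearMap.comp_apply]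
        _ = (φ (Pi.single j (g v))) i := hdv _
    have hx : x = ∑ j : Fin n, Pi.single j (x j) := (Finset.univ_sum_single x).symm
    conv_lhs => rw [hx]
    rw [map_sum, Finset.sum_apply, map_sum]
    have h2 : (fun j => g (x j)) = ∑ j : Fin n, Pi.single j (g (x j)) :=
      (Finset.univ_sum_single _).symm
    rw [h2, map_sum, Finset.sum_apply]
    exact Finset.sum_congr rfl fun j _ => single_case j (x j)
  have hmem : (fun j => g (wv j)) ∈ Submodule.span (MonoidAlgebra K H) {wv} := by
    have h1 : ∀ i, g (wv i) = (π (fun j => g (wv j))) i := by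
      intro i
      have h2 := key π wv i
      rwa [hπw] at h2
    have h3 : (fun j => g (wv j)) = π (fun j => g (wv j)) := funext h1
    rw [h3]; exact hπmem _
  obtain ⟨r, hr⟩ := Submodule.mem_span_singleton.mp hmem
  have hgr : g = σ.asAlgebraHom r := by
    refine (b.ext fun i => ?_).symm
    have h4 := congrFun hr i
    rw [Pi.smul_apply, rsmul] at h4
    exact h4
  rw [hgr]
  refine MonoidAlgebra.induction_on (motive := fun r => σ.asAlgebraHom r ∈ Submodule.span K {f : W →ₗ[K] W | ∃ h : H, f = σ h}) r (fun h => ?_) (fun f1 f2 h1 h2 => ?_) (fun c f hf => ?_)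
  · show σ.asAlgebraHom _ ∈ _
    rw [σ.asAlgebraHom_of]
    exact Submodule.subset_span ⟨h, rfl⟩
  · show σ.asAlgebraHom _ ∈ _
    rw [map_add]; exact Submodule.add_mem _ h1 h2
  · show σ.asAlgebraHom _ ∈ _
    rw [map_smul]; exact Submodule.smul_mem _ _ hf
/-- Schur's lemma over an algebraically closed field. -/
theorem aux_schur {K : Type*} [Field K] [IsAlgClosed K] {H : Type*} [Group H]
    {W : Type*} [AddCommGroup W] [Module K W] [FiniteDimensional K W]
    (σ : Representation K H W) (hσ : RepIsIrreducible σ)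
    (d : W →ₗ[K] W) (hd : ∀ h : H, d ∘ₗ σ h = σ h ∘ₗ d) :
    ∃ c : K, d = c • LinearMap.id := by
  haveI : Nontrivial W := hσ.1
  obtain ⟨c, hc⟩ := Module.End.exists_eigenvalue d
  obtain ⟨v, hv⟩ := hc.exists_hasEigenvector
  refine ⟨c, ?_⟩
  have hker : LinearMap.ker (d - c • LinearMap.id) = ⊤ := by
    have hinv : ∀ h : H, ∀ w ∈ LinearMap.ker (d - c • LinearMap.id),
        σ h w ∈ LinearMap.ker (d - c • LinearMap.id) := by
      intro h w hw
      rw [LinearMap.mem_ker] at hw ⊢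
      have h1 : d (σ h w) = σ h (d w) := by
        rw [← LinearMap.comp_apply, hd h, LinearMap.comp_apply]
      rw [LinearMap.sub_apply, LinearMap.smul_apply, LinearMap.id_apply] at hw ⊢
      rw [h1, ← map_smul, ← map_sub, hw, map_zero]
    rcases hσ.2 (LinearMap.ker (d - c • LinearMap.id)) hinv with h | h
    · exfalso
      have : v ∈ LinearMap.ker (d - c • LinearMap.id) := by
        rw [LinearMap.mem_ker, LinearMap.sub_apply, LinearMap.smul_apply, LinearMap.id_apply,
          hv.apply_eq_smul, sub_self]
      rw [h, Submodule.mem_bot] at this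
      exact hv.2 this
    · exact h
  have h2 : d - c • LinearMap.id = 0 := LinearMap.ker_eq_top.mp hker
  have := sub_eq_zero.mp h2
  exact this

/-- Burnside: an absolutely irreducible finite-dimensional representation spans
the whole endomorphism algebra. -/
theorem aux_burnside {F : Type u} [Field F] {H : Type v} [Group H]
    {W : Type w} [AddCommGroup W] [Module F W] [FiniteDimensional F W]
    (τ : Representation F H W) (hτ : RepIsAbsolutelyIrreducible τ) :
    Submodule.span F {f : W →ₗ[F] W | ∃ h : H, f = τ h} = ⊤ := by
  classical
  let E := AlgebraicClosure F
  let ρ : Representation E H (E ⊗[F] W) :=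
    ((Module.End.baseChangeHom F E W : Module.End F W →ₐ[F] Module.End E (E ⊗[F] W)) :
      Module.End F W →* Module.End E (E ⊗[F] W)).comp τ
  have hρdef : ∀ h : H, ρ h = LinearMap.baseChange E (τ h) := fun h => rfl
  have hρ : RepIsIrreducible ρ := ⟨(hτ E).1, fun p hp => (hτ E).2 p hp⟩
  haveI : FiniteDimensional E (E ⊗[F] W) := inferInstance
  have htop : Submodule.span E {f : (E ⊗[F] W) →ₗ[E] (E ⊗[F] W) | ∃ h : H, f = ρ h} = ⊤ := by
    rw [eq_top_iff]
    intro g _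
    refine aux_dc ρ hρ g (fun d hd => ?_)
    obtain ⟨c, rfl⟩ := aux_schur ρ hρ d hd
    ext v
    simp
  -- dimension count
  set U := Submodule.span F {f : W →ₗ[F] W | ∃ h : H, f = τ h} with hU
  let β : (W →ₗ[F] W) →ₗ[F] ((E ⊗[F] W) →ₗ[E] (E ⊗[F] W)) := LinearMap.baseChangeHom F E W W
  have hβτ : ∀ h : H, β (τ h) = ρ h := fun h => rfl
  set k := Module.finrank F U with hk
  let u := Module.finBasis F U
  have h1 : Submodule.span E (Set.range fun i : Fin k => β ((u i : W →ₗ[F] W))) = ⊤ := by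
    rw [eq_top_iff, ← htop, Submodule.span_le]
    rintro f ⟨h, rfl⟩
    have hmem : τ h ∈ U := Submodule.subset_span ⟨h, rfl⟩
    -- τ h is an F-combination of the u i, so β (τ h) is in the E-span
    have : (⟨τ h, hmem⟩ : U) = ∑ i, u.repr ⟨τ h, hmem⟩ i • u i := (u.sum_repr _).symm
    have h2 : τ h = ∑ i, u.repr ⟨τ h, hmem⟩ i • (u i : W →ₗ[F] W) := by
      have := congrArg (Subtype.val) this
      simpa only [Submodule.coe_sum, Submodule.coe_smul] using this
    rw [← hβτ, h2, map_sum]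
    refine Submodule.sum_mem _ fun i _ => ?_
    rw [map_smul, ← algebraMap_smul E (u.repr ⟨τ h, hmem⟩ i)]
    exact Submodule.smul_mem _ _ (Submodule.subset_span ⟨i, rfl⟩)
  have hdim1 : Module.finrank E ((E ⊗[F] W) →ₗ[E] (E ⊗[F] W)) ≤ k := by
    calc Module.finrank E ((E ⊗[F] W) →ₗ[E] (E ⊗[F] W))
        = Module.finrank E (Submodule.span E (Set.range fun i : Fin k => β ((u i : W →ₗ[F] W)))) := by
          rw [h1, finrank_top]
      _ ≤ Fintype.card (Fin k) := finrank_range_le_card _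
      _ = k := Fintype.card_fin k
  have hdim2 : Module.finrank E ((E ⊗[F] W) →ₗ[E] (E ⊗[F] W))
      = Module.finrank F (W →ₗ[F] W) := by
    rw [Module.finrank_linearMap, Module.finrank_linearMap, Module.finrank_baseChange]
  have hle : Module.finrank F (W →ₗ[F] W) ≤ Module.finrank F U := by
    rw [← hdim2, ← hk]; exact hdim1
  exact Submodule.eq_top_of_finrank_eq (le_antisymm (Submodule.finrank_le U)
    hle)
/-- Let `W1` be a finite-dimensional simple `F[H1]`-module and `W2` a finite-dimensional
absolutely simple `F[H2]`-module, and let `D = End_{F[H1]}(W1)` (the endomorphisms of `W1`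
commuting with the `H1`-action), acting on `W1 ⊗[F] W2` through the first factor. Then the
image of the natural `F`-algebra homomorphism `F[H1 × H2] → End_F(W1 ⊗[F] W2)` — i.e. the
`F`-span of the operators `τ1 h1 ⊗ τ2 h2` — coincides with `End_D(W1 ⊗[F] W2)`, the ring of
`D`-linear endomorphisms of `W1 ⊗[F] W2`. -/
theorem group_algebra_image_eq_commutant_endomorphisms {F : Type u} [Field F]
    {H1 : Type v} [Group H1] {H2 : Type w} [Group H2]
    {W1 : Type x} [AddCommGroup W1] [Module F W1] [FiniteDimensional F W1]
    {W2 : Type y} [AddCommGroup W2] [Module F W2] [FiniteDimensional F W2]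
    (τ1 : Representation F H1 W1) (τ2 : Representation F H2 W2)
    (hτ1 : RepIsIrreducible τ1) (hτ2 : RepIsAbsolutelyIrreducible τ2) :
    (↑(Submodule.span F {g : (W1 ⊗[F] W2) →ₗ[F] (W1 ⊗[F] W2) |
        ∃ (h1 : H1) (h2 : H2), g = TensorProduct.map (τ1 h1) (τ2 h2)}) : Set _) =
      {g : (W1 ⊗[F] W2) →ₗ[F] (W1 ⊗[F] W2) |
        ∀ d : W1 →ₗ[F] W1, (∀ h1 : H1, d ∘ₗ τ1 h1 = τ1 h1 ∘ₗ d) →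
          g ∘ₗ TensorProduct.map d LinearMap.id = TensorProduct.map d LinearMap.id ∘ₗ g} := by
  classical
  apply Set.Subset.antisymm
  · intro g hg
    rw [SetLike.mem_coe] at hg
    simp only [Set.mem_setOf_eq]
    intro d hd
    induction hg using Submodule.span_induction with
    | mem f hf =>
        obtain ⟨h1, h2, rfl⟩ := hf
        rw [← TensorProduct.map_comp, ← TensorProduct.map_comp, hd h1,
          LinearMap.id_comp, LinearMap.comp_id]
    | zero => rw [LinearMap.zero_comp, LinearMap.comp_zero]
    | add f1 f2 _ _ h1 h2 => rw [LinearMap.add_comp, LinearMap.comp_add, h1, h2]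
    | smul c f _ hf => rw [LinearMap.smul_comp, LinearMap.comp_smul, hf]
  · intro g hg
    simp only [Set.mem_setOf_eq] at hg
    rw [SetLike.mem_coe]
    set Φ := (Module.endTensorEndAlgHom (R := F) (S := F) (A := F) (M := W1) (N := W2) :
      (Module.End F W1) ⊗[F] (Module.End F W2) →ₐ[F] Module.End F (W1 ⊗[F] W2)) with hΦ
    have hΦtmul : ∀ (a : Module.End F W1) (b : Module.End F W2),
        Φ (a ⊗ₜ[F] b) = TensorProduct.map a b := fun a b => by
      rw [hΦ, Module.endTensorEndAlgHom_apply]; rfl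
    have hΦeq : ∀ z, Φ z = homTensorHomEquiv F W1 W2 W1 W2 z := by
      intro z
      induction z using TensorProduct.induction_on with
      | zero => simp
      | tmul a b => rw [hΦtmul, homTensorHomEquiv_apply, TensorProduct.homTensorHomMap_apply]
      | add u v hu hv => rw [map_add, map_add, hu, hv]
    have hΦbij : Function.Bijective Φ := by
      have h : ⇑Φ = ⇑(homTensorHomEquiv F W1 W2 W1 W2) := funext hΦeq
      rw [h]
      exact (homTensorHomEquiv F W1 W2 W1 W2).bijective
    obtain ⟨xx, hx⟩ := hΦbij.2 g
    have hxd : ∀ d : Module.End F W1, (∀ h1 : H1, d ∘ₗ τ1 h1 = τ1 h1 ∘ₗ d) →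
        (d ⊗ₜ[F] (1 : Module.End F W2)) * xx = xx * (d ⊗ₜ[F] 1) := by
      intro d hd
      apply hΦbij.1
      rw [map_mul, map_mul, hΦtmul]
      have h1 : TensorProduct.map d (1 : Module.End F W2) = TensorProduct.map d LinearMap.id := rfl
      rw [h1, hx, Module.End.mul_eq_comp, Module.End.mul_eq_comp]
      exact (hg d hd).symm
    set m := Module.finrank F (Module.End F W2) with hm
    set e := Module.finBasis F (Module.End F W2) with he
    set c : Fin m → ((Module.End F W1) ⊗[F] (Module.End F W2) →ₗ[F] Module.End F W1) :=
      fun k => TensorProduct.lift (((LinearMap.lsmul F (Module.End F W1)).comp (e.coord k)).flip)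
      with hcdef
    have hc : ∀ (k : Fin m) (a : Module.End F W1) (b : Module.End F W2),
        c k (a ⊗ₜ[F] b) = e.repr b k • a := fun k a b => rfl
    have hdecomp : ∀ z : (Module.End F W1) ⊗[F] (Module.End F W2),
        z = ∑ k, (c k z) ⊗ₜ[F] (e k) := by
      intro z
      induction z using TensorProduct.induction_on with
      | zero => simp
      | tmul a b =>
          have h : ∀ k : Fin m, (c k (a ⊗ₜ[F] b)) ⊗ₜ[F] (e k) = a ⊗ₜ[F] (e.repr b k • e k) := by
            intro k; rw [hc, TensorProduct.smul_tmul]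
          rw [Finset.sum_congr rfl fun k _ => h k, ← TensorProduct.tmul_sum, Basis.sum_repr]
      | add z1 z2 hz1 hz2 =>
          conv_lhs => rw [hz1, hz2]
          rw [← Finset.sum_add_distrib]
          exact Finset.sum_congr rfl fun k _ => by rw [map_add, TensorProduct.add_tmul]
    have hcoef : ∀ d : Module.End F W1, (∀ h1 : H1, d ∘ₗ τ1 h1 = τ1 h1 ∘ₗ d) →
        ∀ k : Fin m, (c k xx) ∘ₗ d = d ∘ₗ (c k xx) := by
      intro d hd k
      have h0 := hxd d hd
      have hL : (d ⊗ₜ[F] (1 : Module.End F W2)) * xx = ∑ j, (d * c j xx) ⊗ₜ[F] e j := by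
        conv_lhs => rw [hdecomp xx]
        rw [Finset.mul_sum]
        exact Finset.sum_congr rfl fun j _ => by
          rw [Algebra.TensorProduct.tmul_mul_tmul, one_mul]
      have hR : xx * (d ⊗ₜ[F] (1 : Module.End F W2)) = ∑ j, (c j xx * d) ⊗ₜ[F] e j := by
        conv_lhs => rw [hdecomp xx]
        rw [Finset.sum_mul]
        exact Finset.sum_congr rfl fun j _ => by
          rw [Algebra.TensorProduct.tmul_mul_tmul, mul_one]
      have h2 : ∑ j, ((d * c j xx - c j xx * d) ⊗ₜ[F] e j) = 0 := by
        calc ∑ j, ((d * c j xx - c j xx * d) ⊗ₜ[F] e j)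
            = ∑ j, ((d * c j xx) ⊗ₜ[F] e j) - ∑ j, ((c j xx * d) ⊗ₜ[F] e j) := by
              rw [← Finset.sum_sub_distrib]
              exact Finset.sum_congr rfl fun j _ => by rw [TensorProduct.sub_tmul]
          _ = 0 := by rw [← hL, ← hR, h0, sub_self]
      have h3 := congrArg (c k) h2
      rw [map_sum, map_zero] at h3
      have h4 : ∀ j : Fin m, c k ((d * c j xx - c j xx * d) ⊗ₜ[F] e j)
          = if j = k then d * c k xx - c k xx * d else 0 := by
        intro j
        rw [hc, Basis.repr_self, Finsupp.single_apply]
        split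
        · next hjk => subst hjk; rw [one_smul]
        · rw [zero_smul]
      rw [Finset.sum_congr rfl fun j _ => h4 j, Finset.sum_ite_eq' Finset.univ k] at h3
      simp only [Finset.mem_univ, if_true] at h3
      have h5 := sub_eq_zero.mp h3
      rw [← Module.End.mul_eq_comp, ← Module.End.mul_eq_comp]
      exact h5.symm
    have hak : ∀ k : Fin m, c k xx ∈
        Submodule.span F {f : Module.End F W1 | ∃ h : H1, f = τ1 h} :=
      fun k => aux_dc τ1 hτ1 (c k xx) (fun d hd => hcoef d hd k)
    set T := Submodule.span F {g : (W1 ⊗[F] W2) →ₗ[F] (W1 ⊗[F] W2) |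
        ∃ (h1 : H1) (h2 : H2), g = TensorProduct.map (τ1 h1) (τ2 h2)} with hT
    let μ : Module.End F W1 →ₗ[F] Module.End F W2 →ₗ[F]
        ((Module.End F (W1 ⊗[F] W2)) ⧸ T) :=
      LinearMap.compr₂ (TensorProduct.mk F (Module.End F W1) (Module.End F W2))
        (T.mkQ ∘ₗ Φ.toLinearMap)
    have hμ : ∀ a b, μ a b = T.mkQ (Φ (a ⊗ₜ[F] b)) := fun a b => rfl
    have step1 : ∀ (h1 : H1), ∀ b ∈ Submodule.span F {f : Module.End F W2 | ∃ h : H2, f = τ2 h},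
        μ (τ1 h1) b = 0 := by
      intro h1 b hb
      have hle : Submodule.span F {f : Module.End F W2 | ∃ h : H2, f = τ2 h} ≤
          LinearMap.ker (μ (τ1 h1)) := by
        rw [Submodule.span_le]
        rintro f ⟨h2, rfl⟩
        rw [SetLike.mem_coe, LinearMap.mem_ker, hμ, hΦtmul,
          Submodule.mkQ_apply, Submodule.Quotient.mk_eq_zero]
        exact Submodule.subset_span ⟨h1, h2, rfl⟩
      exact hle hb
    have step2 : ∀ a ∈ Submodule.span F {f : Module.End F W1 | ∃ h : H1, f = τ1 h},
        ∀ b ∈ Submodule.span F {f : Module.End F W2 | ∃ h : H2, f = τ2 h}, μ a b = 0 := by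
      intro a ha b hb
      have hle : Submodule.span F {f : Module.End F W1 | ∃ h : H1, f = τ1 h} ≤
          LinearMap.ker (μ.flip b) := by
        rw [Submodule.span_le]
        rintro f ⟨h1, rfl⟩
        rw [SetLike.mem_coe, LinearMap.mem_ker, LinearMap.flip_apply]
        exact step1 h1 b hb
      exact hle ha
    have hxT : ∀ k : Fin m, Φ ((c k xx) ⊗ₜ[F] (e k)) ∈ T := by
      intro k
      have hek : (e k : Module.End F W2) ∈
          Submodule.span F {f : Module.End F W2 | ∃ h : H2, f = τ2 h} := by
        rw [aux_burnside τ2 hτ2]; trivial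
      have h := step2 _ (hak k) _ hek
      rw [hμ, Submodule.mkQ_apply, Submodule.Quotient.mk_eq_zero] at h
      exact h
    have hfinal : g = ∑ k, Φ ((c k xx) ⊗ₜ[F] (e k)) := by
      rw [← hx]
      conv_lhs => rw [hdecomp xx]
      rw [map_sum]
    rw [hfinal]
    exact Submodule.sum_mem _ fun k _ => hxT k
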